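/- Let P be a finite set of points on the real line and S' a finite set of closed intervals of ℝ, each of length exactly 1, such that no endpoint of an interval of S' coincides with a point of P and every point of P is contained in some interval of S'. Then S' discriminates every pair of distinct points of P if and only if S' discriminates every pair of consecutive points of P. -/

import Mathlib

/-- A closed bounded interval of `ℝ` is represented by its pair of endpoints;
a point `p` belongs to the interval `I` if `I.1 ≤ p ∧ p ≤ I.2`. -/
def memI (p : ℝ) (I : ℝ × ℝ) : Prop := I.1 ≤ p ∧ p ≤ I.2

/-- The code of a point `p` with respect to a finite set `S` of intervals:
the set of intervals of `S` containing `p`. -/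
def code (S : Finset (ℝ × ℝ)) (p : ℝ) : Set (ℝ × ℝ) := {I | I ∈ S ∧ memI p I}

/-- `S` is a discriminating code for `P`: every point of `P` has a nonempty code and
distinct points of `P` have distinct codes. -/
def Discr (S : Finset (ℝ × ℝ)) (P : Finset ℝ) : Prop :=
  (∀ p ∈ P, (code S p).Nonempty) ∧
    ∀ p ∈ P, ∀ q ∈ P, p ≠ q → code S p ≠ code S q

/-- `G` is one of the `n+1` gaps determined by the point set `P`:
either `(-∞, min P)`, or `(max P, ∞)`, or the open interval between two
consecutive points of `P`. -/
def IsGap (P : Finset ℝ) (G : Set ℝ) : Prop :=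
  (∃ h : P.Nonempty, G = Set.Iio (P.min' h)) ∨
  (∃ h : P.Nonempty, G = Set.Ioi (P.max' h)) ∨
  (∃ p ∈ P, ∃ q ∈ P, p < q ∧ (∀ r ∈ P, ¬ (p < r ∧ r < q)) ∧ G = Set.Ioo p q)

/-- Every gap determined by `P` contains an endpoint of some interval of `S`. -/
def GapsStabbed (P : Finset ℝ) (S : Finset (ℝ × ℝ)) : Prop :=
  ∀ G : Set ℝ, IsGap P G → ∃ I ∈ S, I.1 ∈ G ∨ I.2 ∈ G

/-- `S` discriminates the pair of points `p, q`: some interval of `S`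
contains exactly one of them. -/
def DiscrPair (S : Finset (ℝ × ℝ)) (p q : ℝ) : Prop :=
  ∃ I ∈ S, Xor' (memI p I) (memI q I)

theorem stmt3 (P : Finset ℝ) (S' : Finset (ℝ × ℝ))
    (hUnit : ∀ I ∈ S', I.2 = I.1 + 1)
    (hEnd : ∀ I ∈ S', ∀ p ∈ P, I.1 ≠ p ∧ I.2 ≠ p)
    (hCov : ∀ p ∈ P, ∃ I ∈ S', memI p I) :
    (∀ p ∈ P, ∀ q ∈ P, p ≠ q → DiscrPair S' p q) ↔
      (∀ p ∈ P, ∀ q ∈ P, p < q → (∀ r ∈ P, ¬ (p < r ∧ r < q)) →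
        DiscrPair S' p q) := by
  constructor
  · intro h p hp q hq hlt _
    exact h p hp q hq (ne_of_lt hlt)
  · intro h
    suffices key : ∀ p ∈ P, ∀ q ∈ P, p < q → DiscrPair S' p q by
      intro p hp q hq hne
      rcases lt_or_gt_of_ne hne with h' | h'
      · exact key p hp q hq h'
      · obtain ⟨I, hI, hx⟩ := key q hq p hp h'
        exact ⟨I, hI, Or.symm hx⟩
    intro p hp q hq hpq
    -- find a consecutive pair r < s with p ≤ r < s ≤ q
    have hT : (P.filter (fun x => p < x ∧ x ≤ q)).Nonempty :=
      ⟨q, by simp [hq, hpq]⟩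
    set s := (P.filter (fun x => p < x ∧ x ≤ q)).min' hT with hs_def
    have hs_mem := Finset.min'_mem _ hT
    rw [Finset.mem_filter] at hs_mem
    obtain ⟨hsP, hps, hsq⟩ := hs_mem
    have hs_min : ∀ x ∈ P.filter (fun x => p < x ∧ x ≤ q), s ≤ x :=
      fun x hx => Finset.min'_le _ x hx
    have hU : (P.filter (fun x => p ≤ x ∧ x < s)).Nonempty :=
      ⟨p, Finset.mem_filter.mpr ⟨hp, le_refl p, hps⟩⟩
    set r := (P.filter (fun x => p ≤ x ∧ x < s)).max' hU with hr_def
    have hr_mem := Finset.max'_mem _ hU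
    rw [Finset.mem_filter] at hr_mem
    obtain ⟨hrP, hpr, hrs⟩ := hr_mem
    have hcons : ∀ t ∈ P, ¬ (r < t ∧ t < s) := by
      intro t ht ⟨h1, h2⟩
      have htp : p < t := lt_of_le_of_lt hpr h1
      have htq : t ≤ q := le_of_lt (lt_of_lt_of_le h2 hsq)
      have : s ≤ t := hs_min t (Finset.mem_filter.mpr ⟨ht, htp, htq⟩)
      linarith
    obtain ⟨I, hIS, hx⟩ := h r hrP s hsP hrs hcons
    have hI2 : I.2 = I.1 + 1 := hUnit I hIS
    rcases hx with ⟨hrI, hsI⟩ | ⟨hsI, hrI⟩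
    · by_cases hpI : memI p I
      · by_cases hqI : memI q I
        · exact absurd ⟨le_trans hrI.1 (le_of_lt hrs), le_trans hsq hqI.2⟩ hsI
        · exact ⟨I, hIS, Or.inl ⟨hpI, hqI⟩⟩
      · by_cases hqI : memI q I
        · exact ⟨I, hIS, Or.inr ⟨hqI, hpI⟩⟩
        · -- p < I.1 and I.2 < q, so q - p > 1
          have hp1 : p < I.1 := by
            by_contra hc
            exact hpI ⟨le_of_not_gt hc, le_trans hpr hrI.2⟩
          have hq2 : I.2 < q := by
            by_contra hc
            exact hqI ⟨le_trans hrI.1 (le_trans (le_of_lt hrs) hsq),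
              le_of_not_gt hc⟩
          obtain ⟨J, hJS, hJp⟩ := hCov p hp
          have hJ2 : J.2 = J.1 + 1 := hUnit J hJS
          refine ⟨J, hJS, Or.inl ⟨hJp, fun hqJ => ?_⟩⟩
          have := hJp.1
          have := hqJ.2
          linarith
    · by_cases hpI : memI p I
      · by_cases hqI : memI q I
        · exact absurd ⟨le_trans hpI.1 hpr, le_trans (le_of_lt hrs) hsI.2⟩ hrI
        · exact ⟨I, hIS, Or.inl ⟨hpI, hqI⟩⟩
      · by_cases hqI : memI q I
        · exact ⟨I, hIS, Or.inr ⟨hqI, hpI⟩⟩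
        · have hp1 : p < I.1 := by
            by_contra hc
            exact hpI ⟨le_of_not_gt hc,
              le_trans (le_trans hpr (le_of_lt hrs)) hsI.2⟩
          have hq2 : I.2 < q := by
            by_contra hc
            exact hqI ⟨le_trans hsI.1 hsq, le_of_not_gt hc⟩
          obtain ⟨J, hJS, hJp⟩ := hCov p hp
          have hJ2 : J.2 = J.1 + 1 := hUnit J hJS
          refine ⟨J, hJS, Or.inl ⟨hJp, fun hqJ => ?_⟩⟩
          have := hJp.1
          have := hqJ.2
          linarith
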